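/- For all integers 1 ≤ k ≤ n, f_k(n) ≤ 4·n·(k−1)!·C(n−1, k−1)², where C(a,b) denotes the binomial coefficient. -/

import Mathlib

/-- The string (as a list) obtained from the one-line notation of `σ`
by deleting all symbols in `A`. -/
def ulamDel {n : ℕ} (σ : Equiv.Perm (Fin n)) (A : Finset (Fin n)) : List (Fin n) :=
  (List.ofFn fun i => σ i).filter (fun x => decide (x ∉ A))

/-- The Ulam distance between two permutations: the least number of distinct
symbols that must be deleted from each until they are equal. -/
noncomputable def ulamDist {n : ℕ} (α β : Equiv.Perm (Fin n)) : ℕ :=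
  sInf {m | ∃ A : Finset (Fin n), A.card = m ∧ ulamDel α A = ulamDel β A}

/-- `f_k(n)`: the maximum size of a set `F ⊆ S_n` such that `d_U(α, β) ≤ k`
for all `α, β ∈ F`. -/
noncomputable def maxDiamFamily (n k : ℕ) : ℕ :=
  sSup {m | ∃ F : Finset (Equiv.Perm (Fin n)), F.card = m ∧
    ∀ α ∈ F, ∀ β ∈ F, ulamDist α β ≤ k}

namespace UlamAux

open List

variable {n : ℕ}

lemma ulamDel_eq_filter (σ : Equiv.Perm (Fin n)) (A : Finset (Fin n)) :
    ulamDel σ A = (List.ofFn σ).filter (fun x => decide (x ∉ A)) := rfl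

lemma ulamDel_nodup (σ : Equiv.Perm (Fin n)) (A : Finset (Fin n)) : (ulamDel σ A).Nodup :=
  (List.nodup_ofFn.mpr σ.injective).filter _

lemma ulamDel_univ (σ : Equiv.Perm (Fin n)) : ulamDel σ (Finset.univ) = [] := by
  rw [ulamDel_eq_filter]
  apply List.filter_eq_nil_iff.mpr
  intro a _
  simp

lemma ulamDel_mono {A B : Finset (Fin n)} (h : A ⊆ B) (σ : Equiv.Perm (Fin n)) :
    ulamDel σ B = (ulamDel σ A).filter (fun y => decide (y ∉ B)) := by
  rw [ulamDel_eq_filter, ulamDel_eq_filter, List.filter_filter]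
  apply List.filter_congr
  intro y _
  by_cases hy : y ∈ B
  · have : y ∈ A ∨ y ∉ A := em _
    simp [hy]
  · have hyA : y ∉ A := fun hA => hy (h hA)
    simp [hy, hyA]

/-- Existence of a deletion certificate of any prescribed size `k ≥` the distance. -/
lemma exists_cert {σ τ : Equiv.Perm (Fin n)} {k : ℕ} (h : ulamDist σ τ ≤ k) (hkn : k ≤ n) :
    ∃ A : Finset (Fin n), A.card = k ∧ ulamDel σ A = ulamDel τ A := by
  have hne : {m | ∃ A : Finset (Fin n), A.card = m ∧ ulamDel σ A = ulamDel τ A}.Nonempty := by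
    refine ⟨n, Finset.univ, by simp, ?_⟩
    rw [ulamDel_univ, ulamDel_univ]
  have hmem := Nat.sInf_mem hne
  obtain ⟨A₀, hA₀card, hA₀⟩ := hmem
  unfold ulamDist at h
  obtain ⟨A, hsub, -, hcard⟩ := Finset.exists_subsuperset_card_eq (Finset.subset_univ A₀)
    (le_trans (le_of_eq hA₀card) h) (by simp [hkn])
  exact ⟨A, hcard, by rw [ulamDel_mono hsub σ, ulamDel_mono hsub τ, hA₀]⟩

/-- If `σ⁻¹ a < σ⁻¹ u` then `[a, u]` is a sublist of the one-line notation of `σ`. -/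
lemma pair_sublist (σ : Equiv.Perm (Fin n)) {a u : Fin n} (h : σ.symm a < σ.symm u) :
    [a, u] <+ List.ofFn σ := by
  set i : Fin n := σ.symm a with hi
  set j : Fin n := σ.symm u with hj
  have hjlen : (j : ℕ) < (List.ofFn σ).length := by simp [j.isLt]
  have hdecomp : List.ofFn σ = (List.ofFn σ).take (j : ℕ) ++ (u :: (List.ofFn σ).drop ((j : ℕ) + 1)) := by
    conv_lhs => rw [← List.take_append_drop (j : ℕ) (List.ofFn σ)]
    rw [List.drop_eq_getElem_cons hjlen]
    congr 2
    rw [List.getElem_ofFn]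
    show σ ⟨(j : ℕ), _⟩ = u
    have : (⟨(j : ℕ), j.isLt⟩ : Fin n) = j := rfl
    rw [this, hj, Equiv.apply_symm_apply]
  have hilt : (i : ℕ) < ((List.ofFn σ).take (j : ℕ)).length := by
    simp only [List.length_take, List.length_ofFn]
    exact lt_min h i.isLt
  have hamem : a ∈ (List.ofFn σ).take (j : ℕ) := by
    have : ((List.ofFn σ).take (j : ℕ))[(i : ℕ)] = a := by
      rw [List.getElem_take]
      rw [List.getElem_ofFn]
      show σ ⟨(i : ℕ), _⟩ = a
      have : (⟨(i : ℕ), i.isLt⟩ : Fin n) = i := rfl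
      rw [this, hi, Equiv.apply_symm_apply]
    rw [← this]
    exact List.getElem_mem _
  have h1 : [a] <+ (List.ofFn σ).take (j : ℕ) := List.singleton_sublist.mpr hamem
  have h2 : [u] <+ u :: (List.ofFn σ).drop ((j : ℕ) + 1) :=
    (List.nil_sublist _).cons₂ u
  have := h1.append h2
  rw [← hdecomp] at this
  exact this

/-- Two-element case analysis for sublists of a cons. -/
lemma pair_sublist_cons {α : Type*} {a u c : α} {t : List α} (h : [a, u] <+ c :: t) :
    [a, u] <+ t ∨ (a = c ∧ u ∈ t) := by
  cases h with
  | cons _ h' => exact Or.inl h'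
  | cons_cons _ h' => exact Or.inr ⟨rfl, List.singleton_sublist.mp h'⟩

/-- In a duplicate-free list, `[a,u]` and `[u,a]` cannot both be sublists when `a ≠ u`. -/
lemma sublist_asymm {α : Type*} : ∀ {l : List α}, l.Nodup → ∀ {a u : α},
    [a, u] <+ l → [u, a] <+ l → a ≠ u → False := by
  intro l
  induction l with
  | nil => intro _ a u hau _ _; simp at hau
  | cons c t ih =>
    intro hnd a u hau hua hne
    have hct : c ∉ t := (List.nodup_cons.mp hnd).1
    have hndt : t.Nodup := (List.nodup_cons.mp hnd).2
    rcases pair_sublist_cons hau with h1 | ⟨hac, hut⟩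
    · rcases pair_sublist_cons hua with h2 | ⟨huc, hat⟩
      · exact ih hndt h1 h2 hne
      · -- u = c, and [a,u] <+ t gives u ∈ t, contradicting c ∉ t
        have : u ∈ t := by
          have : [u] <+ [a, u] := by
            apply List.singleton_sublist.mpr; simp
          have := this.trans h1
          exact List.singleton_sublist.mp this
        exact hct (huc ▸ this)
    · rcases pair_sublist_cons hua with h2 | ⟨huc, hat⟩
      · -- a = c, [u,a] <+ t gives a ∈ t
        have : a ∈ t := by
          have : [a] <+ [u, a] := by
            apply List.singleton_sublist.mpr; simp
          have := this.trans h2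
          exact List.singleton_sublist.mp this
        exact hct (hac ▸ this)
      · exact hne (hac.trans huc.symm)

/-- Order of surviving symbols transfers through equal deletions. -/
lemma order_transfer {σ τ : Equiv.Perm (Fin n)} {A : Finset (Fin n)}
    (h : ulamDel σ A = ulamDel τ A) {a u : Fin n} (ha : a ∉ A) (hu : u ∉ A)
    (hne : a ≠ u) (hlt : σ.symm a < σ.symm u) : τ.symm a < τ.symm u := by
  have hfilter : [a, u].filter (fun y => decide (y ∉ A)) = [a, u] := by
    simp [ha, hu]
  have hs : [a, u] <+ ulamDel σ A := by
    have := (pair_sublist σ hlt).filter (fun y => decide (y ∉ A))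
    rwa [hfilter] at this
  rw [h] at hs
  by_contra hcon
  have hne' : τ.symm u ≠ τ.symm a := fun heq => hne (τ.symm.injective heq).symm
  have hlt' : τ.symm u < τ.symm a := lt_of_le_of_ne (not_lt.mp hcon) hne'
  have hfilter' : [u, a].filter (fun y => decide (y ∉ A)) = [u, a] := by
    simp [ha, hu]
  have hs2 : [u, a] <+ ulamDel τ A := by
    have := (pair_sublist τ hlt').filter (fun y => decide (y ∉ A))
    rwa [hfilter'] at this
  exact sublist_asymm (ulamDel_nodup τ A) hs hs2 hne

/-- Counting lemma: prefix filter length plus the number of `A`-symbols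
placed before position `m` equals `m`. -/
lemma count_aux (σ : Equiv.Perm (Fin n)) (A : Finset (Fin n)) :
    ∀ m : ℕ, m ≤ n →
    (((List.ofFn σ).take m).filter (fun y => decide (y ∉ A))).length
      + (A.filter (fun s => ((σ.symm s : Fin n) : ℕ) < m)).card = m := by
  intro m
  induction m with
  | zero => intro _; simp
  | succ m ih =>
    intro hm1
    have hm : m < n := hm1
    have hmn : m ≤ n := le_of_lt hm
    have hlen : m < (List.ofFn σ).length := by simpa using hm
    have htake : (List.ofFn σ).take (m + 1)
        = (List.ofFn σ).take m ++ [σ ⟨m, hm⟩] := by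
      rw [List.take_succ, List.getElem?_eq_getElem hlen]
      simp [List.getElem_ofFn]
    have hAsplit : A.filter (fun s => ((σ.symm s : Fin n) : ℕ) < m + 1)
        = A.filter (fun s => ((σ.symm s : Fin n) : ℕ) < m)
          ∪ A.filter (fun s => ((σ.symm s : Fin n) : ℕ) = m) := by
      rw [← Finset.filter_or]
      apply Finset.filter_congr
      intro s _
      exact Nat.lt_succ_iff_lt_or_eq
    have hdisj : Disjoint (A.filter (fun s => ((σ.symm s : Fin n) : ℕ) < m))
        (A.filter (fun s => ((σ.symm s : Fin n) : ℕ) = m)) := by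
      apply Finset.disjoint_filter_filter'
      rw [disjoint_iff_inf_le]
      intro s hs
      simp only [Pi.inf_apply, inf_Prop_eq] at hs
      omega
    have heq : A.filter (fun s => ((σ.symm s : Fin n) : ℕ) = m)
        = A.filter (fun s => s = σ ⟨m, hm⟩) := by
      apply Finset.filter_congr
      intro s _
      constructor
      · intro hval
        have : σ.symm s = ⟨m, hm⟩ := Fin.ext hval
        rw [← this, Equiv.apply_symm_apply]
      · intro hs
        rw [hs, Equiv.symm_apply_apply]
    rw [htake, List.filter_append, List.length_append, hAsplit,
      Finset.card_union_of_disjoint hdisj, heq, Finset.filter_eq']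
    by_cases hmem : σ ⟨m, hm⟩ ∈ A
    · have : ([σ ⟨m, hm⟩].filter (fun y => decide (y ∉ A))).length = 0 := by
        simp [hmem]
      rw [this, if_pos hmem]
      have := ih hmn
      simp only [Finset.card_singleton]
      omega
    · have : ([σ ⟨m, hm⟩].filter (fun y => decide (y ∉ A))).length = 1 := by
        simp [hmem]
      rw [this, if_neg hmem]
      have := ih hmn
      simp only [Finset.card_empty]
      omega

/-- Reconstruction: a permutation is determined by an equal-deletion string
together with the positions of the deleted symbols. -/
lemma recon {σ τ : Equiv.Perm (Fin n)} {A : Finset (Fin n)}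
    (hdel : ulamDel σ A = ulamDel τ A) (hpos : ∀ s ∈ A, σ.symm s = τ.symm s) : σ = τ := by
  apply Equiv.ext
  intro p
  by_cases hσ : σ p ∈ A
  · have h1 : σ.symm (σ p) = τ.symm (σ p) := hpos _ hσ
    rw [Equiv.symm_apply_apply] at h1
    conv_rhs => rw [h1]
    exact (Equiv.apply_symm_apply τ (σ p)).symm
  · have hτ : τ p ∉ A := by
      intro hmem
      have h1 : σ.symm (τ p) = τ.symm (τ p) := hpos _ hmem
      rw [Equiv.symm_apply_apply] at h1
      have : σ (σ.symm (τ p)) = σ p := by rw [h1]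
      rw [Equiv.apply_symm_apply] at this
      exact hσ (this ▸ hmem)
    -- split both deletions at position p
    have hplen : (p : ℕ) < (List.ofFn σ).length := by simp [p.isLt]
    have hplen' : (p : ℕ) < (List.ofFn τ).length := by simp [p.isLt]
    have hsplit : ∀ (ρ : Equiv.Perm (Fin n)), ρ p ∉ A →
        ulamDel ρ A = ((List.ofFn ρ).take (p : ℕ)).filter (fun y => decide (y ∉ A))
          ++ ρ p :: ((List.ofFn ρ).drop ((p : ℕ) + 1)).filter (fun y => decide (y ∉ A)) := by
      intro ρ hρ
      have hplenρ : (p : ℕ) < (List.ofFn ρ).length := by simp [p.isLt]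
      rw [ulamDel_eq_filter]
      conv_lhs => rw [← List.take_append_drop (p : ℕ) (List.ofFn ρ), List.drop_eq_getElem_cons hplenρ]
      rw [List.filter_append, List.filter_cons]
      have hget : (List.ofFn ρ)[(p : ℕ)] = ρ p := by
        rw [List.getElem_ofFn]
      rw [hget]
      simp [hρ]
    have h1 := hsplit σ hσ
    have h2 := hsplit τ hτ
    have hcount : (((List.ofFn σ).take (p : ℕ)).filter (fun y => decide (y ∉ A))).length
        = (((List.ofFn τ).take (p : ℕ)).filter (fun y => decide (y ∉ A))).length := by
      have e1 := count_aux σ A (p : ℕ) (le_of_lt p.isLt)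
      have e2 := count_aux τ A (p : ℕ) (le_of_lt p.isLt)
      have e3 : A.filter (fun s => ((σ.symm s : Fin n) : ℕ) < (p : ℕ))
          = A.filter (fun s => ((τ.symm s : Fin n) : ℕ) < (p : ℕ)) := by
        apply Finset.filter_congr
        intro s hs
        rw [hpos s hs]
      rw [e3] at e1
      omega
    rw [h1, h2] at hdel
    obtain ⟨-, htail⟩ := List.append_inj hdel hcount
    exact (List.cons.injEq _ _ _ _ ▸ htail).1


lemma orderEmbOfFin_congr {α : Type*} [LinearOrder α] {s t : Finset α} {k : ℕ}
    (h : s = t) (hs : s.card = k) (ht : t.card = k) (i : Fin k) :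
    s.orderEmbOfFin hs i = t.orderEmbOfFin ht i := by
  subst h; rfl

/-- The cardinality of a "class": permutations having a `k`-certificate
relative to `ρ` that contains the symbol `x`. -/
lemma card_class {k : ℕ} (_hk1 : 1 ≤ k) (ρ : Equiv.Perm (Fin n)) (x : Fin n)
    (G : Finset (Equiv.Perm (Fin n)))
    (hG : ∀ γ ∈ G, ∃ A : Finset (Fin n), A.card = k ∧ x ∈ A ∧ ulamDel γ A = ulamDel ρ A) :
    G.card ≤ (n - 1).choose (k - 1) * n.descFactorial k := by
  classical
  by_cases hkn : k ≤ n
  case neg =>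
    -- A ⊆ univ gives A.card ≤ n < k, contradiction, so G = ∅.
    have : G = ∅ := by
      rw [Finset.eq_empty_iff_forall_notMem]
      intro γ hγ
      obtain ⟨A, hAcard, -, -⟩ := hG γ hγ
      have : A.card ≤ n := by
        have := Finset.card_le_card (Finset.subset_univ A)
        simpa using this
      omega
    simp [this]
  case pos =>
  set T := (Finset.powersetCard (k - 1) (Finset.univ.erase x)) ×ˢ
    (Finset.univ : Finset (Fin k ↪ Fin n)) with hT
  have hTcard : T.card = (n - 1).choose (k - 1) * n.descFactorial k := by
    rw [hT, Finset.card_product, Finset.card_powersetCard,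
      Finset.card_erase_of_mem (Finset.mem_univ x)]
    congr 1
    · congr 1
      simp
    · rw [Finset.card_univ, Fintype.card_embedding_eq]
      simp
  rw [← hTcard]
  have hjunk : Fin k ↪ Fin n := Fin.castLEEmb hkn
  set f : Equiv.Perm (Fin n) → Finset (Fin n) × (Fin k ↪ Fin n) := fun γ =>
    if h : ∃ A : Finset (Fin n), A.card = k ∧ x ∈ A ∧ ulamDel γ A = ulamDel ρ A then
      ((h.choose).erase x,
        ((h.choose).orderEmbOfFin h.choose_spec.1).toEmbedding.trans γ.symm.toEmbedding)
    else (∅, hjunk) with hf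
  apply Finset.card_le_card_of_injOn f
  · intro γ hγ
    have h := hG γ hγ
    rw [hf]
    simp only [dif_pos h]
    rw [Finset.mem_coe, hT, Finset.mem_product]
    constructor
    · rw [Finset.mem_powersetCard]
      refine ⟨Finset.erase_subset_erase x (Finset.subset_univ _), ?_⟩
      rw [Finset.card_erase_of_mem h.choose_spec.2.1, h.choose_spec.1]
    · exact Finset.mem_univ _
  · intro γ₁ hγ₁ γ₂ hγ₂ hfeq
    simp only [Finset.mem_coe] at hγ₁ hγ₂
    have h₁ := hG γ₁ hγ₁
    have h₂ := hG γ₂ hγ₂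
    rw [hf] at hfeq
    simp only [dif_pos h₁, dif_pos h₂, Prod.mk.injEq] at hfeq
    obtain ⟨hfst, hsnd⟩ := hfeq
    have hAeq : h₁.choose = h₂.choose := by
      have e1 := Finset.insert_erase h₁.choose_spec.2.1
      have e2 := Finset.insert_erase h₂.choose_spec.2.1
      rw [← e1, ← e2, hfst]
    have hpos : ∀ s ∈ h₁.choose, γ₁.symm s = γ₂.symm s := by
      intro s hs
      have hrange : s ∈ Set.range (h₁.choose.orderEmbOfFin h₁.choose_spec.1) := by
        rw [Finset.range_orderEmbOfFin]
        exact hs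
      obtain ⟨i, hi⟩ := hrange
      have happ := congrArg (fun (e : Fin k ↪ Fin n) => e i) hsnd
      simp only [Function.Embedding.trans_apply, RelEmbedding.coe_toEmbedding,
        Equiv.coe_toEmbedding] at happ
      have hsame : (h₂.choose.orderEmbOfFin h₂.choose_spec.1) i
          = (h₁.choose.orderEmbOfFin h₁.choose_spec.1) i :=
        orderEmbOfFin_congr hAeq.symm _ _ i
      rw [hsame, hi] at happ
      exact happ
    have hdel : ulamDel γ₁ h₁.choose = ulamDel γ₂ h₁.choose := by
      rw [h₁.choose_spec.2.2, hAeq, h₂.choose_spec.2.2]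
    exact recon hdel hpos

/-- Existence of a pair of symbols ordered differently in two distinct permutations. -/
lemma exists_inverted {σ τ : Equiv.Perm (Fin n)} (hne : σ ≠ τ) :
    ∃ a u : Fin n, a ≠ u ∧ σ.symm a < σ.symm u ∧ ¬(τ.symm a < τ.symm u) := by
  by_contra hcon
  push_neg at hcon
  -- all pairwise orders transfer from σ to τ
  have htrans : ∀ a u : Fin n, a ≠ u → (σ.symm a < σ.symm u → τ.symm a < τ.symm u) := by
    intro a u hau h
    exact hcon a u hau h
  have hmono : StrictMono (fun i => τ.symm (σ i)) := by
    intro i j hij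
    have hne' : σ i ≠ σ j := fun h => (ne_of_lt hij) (σ.injective h)
    apply htrans _ _ hne'
    simp only [Equiv.symm_apply_apply]
    exact hij
  have hsurj : Function.Surjective (fun i => τ.symm (σ i)) :=
    (σ.trans τ.symm).surjective
  have hid : ∀ i, τ.symm (σ i) = i := by
    intro i
    have h0 : StrictMono.orderIsoOfSurjective _ hmono hsurj = OrderIso.refl (Fin n) :=
      Subsingleton.elim _ _
    have h1 := congrFun (StrictMono.coe_orderIsoOfSurjective _ hmono hsurj) i
    rw [h0] at h1
    simpa using h1.symm
  apply hne
  apply Equiv.ext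
  intro i
  have := hid i
  calc σ i = τ (τ.symm (σ i)) := (Equiv.apply_symm_apply _ _).symm
  _ = τ i := by rw [this]

end UlamAux

/-- For all `1 ≤ k ≤ n`, `f_k(n) ≤ 4·n·(k−1)!·C(n−1, k−1)²`. -/
theorem maxDiamFamily_other_bound (n k : ℕ) (hk : 1 ≤ k) (hkn : k ≤ n) :
    maxDiamFamily n k ≤ 4 * n * (k - 1).factorial * ((n - 1).choose (k - 1)) ^ 2 := by
  classical
  have hn1 : 1 ≤ n := le_trans hk hkn
  -- the right-hand side rewritten through the class bound
  have harith : (n - 1).choose (k - 1) * n.descFactorial k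
      = n * (k - 1).factorial * ((n - 1).choose (k - 1)) ^ 2 := by
    have h1 : n.descFactorial k = n * (n - 1).descFactorial (k - 1) := by
      obtain ⟨n', rfl⟩ := Nat.exists_eq_add_of_le hn1
      obtain ⟨k', rfl⟩ := Nat.exists_eq_add_of_le hk
      simp only [Nat.add_comm 1 n', Nat.add_comm 1 k', Nat.add_sub_cancel]
      exact Nat.succ_descFactorial_succ _ _
    rw [h1, Nat.descFactorial_eq_factorial_mul_choose]
    ring
  have hRHSpos : 1 ≤ 4 * n * (k - 1).factorial * ((n - 1).choose (k - 1)) ^ 2 := by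
    have hc : 0 < (n - 1).choose (k - 1) :=
      Nat.choose_pos (Nat.sub_le_sub_right hkn 1)
    have hf : 0 < (k - 1).factorial := Nat.factorial_pos _
    have : 0 < 4 * n * (k - 1).factorial * ((n - 1).choose (k - 1)) ^ 2 := by
      apply Nat.mul_pos
      apply Nat.mul_pos
      apply Nat.mul_pos
      · omega
      · omega
      · exact hf
      · exact Nat.pow_pos (n := 2) hc |>.trans_le (le_of_eq rfl) |>.trans_le (le_refl _)
    omega
  apply csSup_le
  · exact ⟨0, ∅, by simp⟩
  intro m hm
  obtain ⟨F, rfl, hF⟩ := hm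
  by_cases hsmall : F.card ≤ 1
  · exact le_trans hsmall hRHSpos
  -- two distinct members exist
  push_neg at hsmall
  obtain ⟨β₀, hβ₀, βs, hβs, hβne⟩ := Finset.one_lt_card.mp hsmall
  obtain ⟨a, u, hau, h0lt, hbnot⟩ := UlamAux.exists_inverted (Ne.symm (hβne.symm)) -- β₀ ≠ βs
  -- four classes
  set G1 := F.filter (fun γ => ∃ A : Finset (Fin n),
      A.card = k ∧ a ∈ A ∧ ulamDel γ A = ulamDel β₀ A) with hG1
  set G2 := F.filter (fun γ => ∃ A : Finset (Fin n),
      A.card = k ∧ u ∈ A ∧ ulamDel γ A = ulamDel β₀ A) with hG2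
  set G3 := F.filter (fun γ => ∃ A : Finset (Fin n),
      A.card = k ∧ a ∈ A ∧ ulamDel γ A = ulamDel βs A) with hG3
  set G4 := F.filter (fun γ => ∃ A : Finset (Fin n),
      A.card = k ∧ u ∈ A ∧ ulamDel γ A = ulamDel βs A) with hG4
  have hcover : F ⊆ G1 ∪ G2 ∪ G3 ∪ G4 := by
    intro γ hγ
    obtain ⟨A, hAcard, hA⟩ := UlamAux.exists_cert (hF β₀ hβ₀ γ hγ) hkn
    obtain ⟨B, hBcard, hB⟩ := UlamAux.exists_cert (hF βs hβs γ hγ) hkn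
    by_cases haA : a ∈ A
    · exact Finset.mem_union_left _ (Finset.mem_union_left _ (Finset.mem_union_left _
        (Finset.mem_filter.mpr ⟨hγ, A, hAcard, haA, hA.symm⟩)))
    by_cases huA : u ∈ A
    · exact Finset.mem_union_left _ (Finset.mem_union_left _ (Finset.mem_union_right _
        (Finset.mem_filter.mpr ⟨hγ, A, hAcard, huA, hA.symm⟩)))
    by_cases haB : a ∈ B
    · exact Finset.mem_union_left _ (Finset.mem_union_right _
        (Finset.mem_filter.mpr ⟨hγ, B, hBcard, haB, hB.symm⟩))
    by_cases huB : u ∈ B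
    · exact Finset.mem_union_right _
        (Finset.mem_filter.mpr ⟨hγ, B, hBcard, huB, hB.symm⟩)
    -- contradiction: order transfers β₀ → γ → βs
    exfalso
    have h1 : γ.symm a < γ.symm u :=
      UlamAux.order_transfer hA haA huA hau h0lt
    have h2 : βs.symm a < βs.symm u :=
      UlamAux.order_transfer hB.symm haB huB hau h1
    exact hbnot h2
  have hclasses : ∀ (ρ : Equiv.Perm (Fin n)) (x : Fin n)
      (G : Finset (Equiv.Perm (Fin n))),
      (G = F.filter (fun γ => ∃ A : Finset (Fin n),
        A.card = k ∧ x ∈ A ∧ ulamDel γ A = ulamDel ρ A)) →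
      G.card ≤ (n - 1).choose (k - 1) * n.descFactorial k := by
    intro ρ x G hGdef
    apply UlamAux.card_class hk ρ x
    intro γ hγ
    rw [hGdef] at hγ
    exact (Finset.mem_filter.mp hγ).2
  have hb1 := hclasses β₀ a G1 hG1
  have hb2 := hclasses β₀ u G2 hG2
  have hb3 := hclasses βs a G3 hG3
  have hb4 := hclasses βs u G4 hG4
  calc F.card ≤ (G1 ∪ G2 ∪ G3 ∪ G4).card := Finset.card_le_card hcover
  _ ≤ (G1 ∪ G2 ∪ G3).card + G4.card := Finset.card_union_le _ _
  _ ≤ ((G1 ∪ G2).card + G3.card) + G4.card := by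
      have := Finset.card_union_le (G1 ∪ G2) G3
      omega
  _ ≤ ((G1.card + G2.card) + G3.card) + G4.card := by
      have := Finset.card_union_le G1 G2
      omega
  _ ≤ 4 * ((n - 1).choose (k - 1) * n.descFactorial k) := by omega
  _ = 4 * n * (k - 1).factorial * ((n - 1).choose (k - 1)) ^ 2 := by
      rw [harith]; ring
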